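/- Fix ω₀ > 0 and z₀ ∈ ℂ, let p₀ := p(ω₀, z₀), and for z ∈ ℂ let p̂(z) := p(1, z). Then for every z ≠ z₀, (ω₀/(4π)) · ((conj z − conj z₀)/(z − z₀)) · (1 + z₀·conj z)² / ((1+|z|²)(1+|z₀|²)) = −(1/(4π)) · η(p₀, ε̄(z))² / η(p₀, p̂(z)). (This is the paper's identity (4.13) expressing the memory Green's function in the Weinberg soft-factor form p₀^μ p₀^ν ε̄_{μν} / (p₀ · p̂), which identifies the soft coefficient S⁽⁰⁾ in the infrared finite soft graviton theorem.) -/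

import Mathlib

noncomputable section

/-- The Minkowski bilinear form on `ℂ⁴`:
`η(u,v) = −u₀v₀ + u₁v₁ + u₂v₂ + u₃v₃`. -/
def eta (u v : Fin 4 → ℂ) : ℂ := -(u 0 * v 0) + u 1 * v 1 + u 2 * v 2 + u 3 * v 3

/-- The null momentum of frequency `ω` and stereographic angular direction `z`:
`p(ω,z) = ω (1, (z+z̄)/(1+|z|²), −i(z−z̄)/(1+|z|²), (1−|z|²)/(1+|z|²))`. -/
def pmom (ω : ℝ) (z : ℂ) : Fin 4 → ℂ := fun i =>
  (ω : ℂ) * ![1,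
    (z + (starRingEnd ℂ) z) / (1 + ((‖z‖ : ℝ) : ℂ) ^ 2),
    -Complex.I * (z - (starRingEnd ℂ) z) / (1 + ((‖z‖ : ℝ) : ℂ) ^ 2),
    (1 - ((‖z‖ : ℝ) : ℂ) ^ 2) / (1 + ((‖z‖ : ℝ) : ℂ) ^ 2)] i

/-- The conformal factor `P(z) = (1 + |z|²)/√2`. -/
def Pconf (z : ℂ) : ℝ := (1 + ‖z‖ ^ 2) / Real.sqrt 2

/-- The polarization vector `ε(z) = (1/2P)(0, 1−z², i(1+z²), −2z)`. -/
def epsPol (z : ℂ) : Fin 4 → ℂ := fun i =>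
  (1 / (2 * ((Pconf z : ℝ) : ℂ))) * ![0, 1 - z ^ 2, Complex.I * (1 + z ^ 2), -2 * z] i

/-- The polarization vector `ε̄(z) = (1/2P)(0, 1−z̄², −i(1+z̄²), −2z̄)`. -/
def epsBarPol (z : ℂ) : Fin 4 → ℂ := fun i =>
  (1 / (2 * ((Pconf z : ℝ) : ℂ))) *
    ![0, 1 - ((starRingEnd ℂ) z) ^ 2, -Complex.I * (1 + ((starRingEnd ℂ) z) ^ 2),
      -2 * (starRingEnd ℂ) z] i

set_option maxHeartbeats 1600000 in
/-- The paper's identity (4.13): the gravitational memory Green's function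
equals the Weinberg soft factor. For `ω₀ > 0`, `p₀ := p(ω₀,z₀)`,
`p̂(z) := p(1,z)`, and every `z ≠ z₀`,
`(ω₀/4π)((z̄−z̄₀)/(z−z₀))(1+z₀z̄)²/((1+|z|²)(1+|z₀|²))
  = −(1/4π) η(p₀, ε̄(z))² / η(p₀, p̂(z))`. -/
theorem memG_eq_weinberg_soft_factor
    (ω₀ : ℝ) (hω₀ : 0 < ω₀) (z₀ : ℂ) (z : ℂ) (hz : z ≠ z₀) :
    ((ω₀ / (4 * Real.pi) : ℝ) : ℂ) *
        (((starRingEnd ℂ) z - (starRingEnd ℂ) z₀) / (z - z₀)) *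
        (1 + z₀ * (starRingEnd ℂ) z) ^ 2 /
        (((1 + ‖z‖ ^ 2 : ℝ) : ℂ) * ((1 + ‖z₀‖ ^ 2 : ℝ) : ℂ))
      = -((1 / (4 * Real.pi) : ℝ) : ℂ) *
          (eta (pmom ω₀ z₀) (epsBarPol z)) ^ 2 / eta (pmom ω₀ z₀) (pmom 1 z) := by
  have hz' : z - z₀ ≠ 0 := sub_ne_zero.mpr hz
  have hzc : (starRingEnd ℂ) z - (starRingEnd ℂ) z₀ ≠ 0 := by
    rw [← map_sub]
    exact fun h => hz' (by simpa using congrArg (starRingEnd ℂ) h)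
  have hπ : (Real.pi : ℂ) ≠ 0 := Complex.ofReal_ne_zero.mpr Real.pi_ne_zero
  have hω : (ω₀ : ℂ) ≠ 0 := Complex.ofReal_ne_zero.mpr hω₀.ne'
  have hs2 : (Real.sqrt 2 : ℂ) ≠ 0 :=
    Complex.ofReal_ne_zero.mpr (Real.sqrt_ne_zero'.mpr two_pos)
  have hss : (Real.sqrt 2 : ℂ) * (Real.sqrt 2 : ℂ) = 2 := by
    rw [← Complex.ofReal_mul, Real.mul_self_sqrt (by norm_num)]
    norm_num
  have hA : ∀ w : ℂ, ((‖w‖ : ℝ) : ℂ) ^ 2 = w * (starRingEnd ℂ) w := by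
    intro w
    rw [← Complex.ofReal_pow, Complex.sq_norm, Complex.mul_conj]
  have h1 : ∀ w : ℂ, 1 + w * (starRingEnd ℂ) w ≠ 0 := by
    intro w
    rw [Complex.mul_conj, ← Complex.ofReal_one, ← Complex.ofReal_add]
    exact Complex.ofReal_ne_zero.mpr
      (by nlinarith [Complex.normSq_nonneg w] : (0:ℝ) < 1 + Complex.normSq w).ne'
  have hzz := h1 z
  have hzz0 := h1 z₀
  have hD : eta (pmom ω₀ z₀) (pmom 1 z) =
      (ω₀ : ℂ) * (-2 * ((z - z₀) * ((starRingEnd ℂ) z - (starRingEnd ℂ) z₀))) /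
        ((1 + z * (starRingEnd ℂ) z) * (1 + z₀ * (starRingEnd ℂ) z₀)) := by
    simp only [eta, pmom, Matrix.cons_val_zero, Matrix.cons_val_one, Matrix.head_cons,
      Matrix.cons_val_two, Matrix.tail_cons, Matrix.cons_val_three, hA]
    field_simp
    ring_nf
    simp only [Complex.I_sq, Complex.ofReal_one]
    ring
  have hN : eta (pmom ω₀ z₀) (epsBarPol z) =
      -(Real.sqrt 2 : ℂ) * (ω₀ : ℂ) *
          (((starRingEnd ℂ) z - (starRingEnd ℂ) z₀) * (1 + z₀ * (starRingEnd ℂ) z)) /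
        ((1 + z * (starRingEnd ℂ) z) * (1 + z₀ * (starRingEnd ℂ) z₀)) := by
    simp only [eta, pmom, epsBarPol, Pconf, Matrix.cons_val_zero, Matrix.cons_val_one,
      Matrix.head_cons, Matrix.cons_val_two, Matrix.tail_cons, Matrix.cons_val_three]
    push_cast
    rw [hA z, hA z₀]
    field_simp
    ring_nf
    simp only [Complex.I_sq, show ((Real.sqrt 2 : ℝ) : ℂ) ^ 2 = 2 by rw [sq, hss]]
    ring_nf
  have hden : eta (pmom ω₀ z₀) (pmom 1 z) ≠ 0 := by
    rw [hD]
    exact div_ne_zero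
      (mul_ne_zero hω (mul_ne_zero (by norm_num) (mul_ne_zero hz' hzc)))
      (mul_ne_zero hzz hzz0)
  rw [hD, hN]
  rw [div_div_eq_mul_div]
  push_cast
  rw [hA z, hA z₀]
  rw [div_pow, div_eq_div_iff (mul_ne_zero hzz hzz0)
    (mul_ne_zero hω (mul_ne_zero (by norm_num) (mul_ne_zero hz' hzc)))]
  field_simp
  have hzz' : 1 + (starRingEnd ℂ) z * z ≠ 0 := by rwa [mul_comm]
  have hzz0' : 1 + (starRingEnd ℂ) z₀ * z₀ ≠ 0 := by rwa [mul_comm]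
  field_simp
  ring_nf
  simp only [show ((Real.sqrt 2 : ℝ) : ℂ) ^ 2 = 2 by rw [sq, hss]]
  ring_nf

end
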